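/- For κ < 0, m > 0, c ≠ 0 with c^4κ + m^2 > 0, the polynomial q(x) = 16κ^2(c^4κ + m^2)x^3 − 8κ(6c^4κ + 5m^2)x^2 + (48c^4κ + 25m^2)x − 16c^4 has exactly one positive real root. -/

import Mathlib

/-- A real cubic with positive leading coefficient and negative constant term
has a positive root. -/
lemma cubic_pos_root (A B C D : ℝ) (hA : 0 < A) (hD : D < 0) :
    ∃ x : ℝ, 0 < x ∧ A * x ^ 3 + B * x ^ 2 + C * x + D = 0 := by
  set S := |B| + |C| + |D| with hS
  have hS0 : 0 ≤ S := by positivity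
  set M := S / A + 2 with hMdef
  have hM1 : (1 : ℝ) ≤ M := by
    have : 0 ≤ S / A := div_nonneg hS0 hA.le
    simp only [hMdef]; linarith
  have h1 : A * M = S + 2 * A := by
    rw [hMdef]; field_simp
  have h2 : A * M ^ 3 = (S + 2 * A) * M ^ 2 := by
    linear_combination M ^ 2 * h1
  have hfM : 0 < A * M ^ 3 + B * M ^ 2 + C * M + D := by
    nlinarith [neg_abs_le B, neg_abs_le C, neg_abs_le D, sq_nonneg M,
      mul_pos hA (mul_pos (by linarith : (0:ℝ) < M) (by linarith : (0:ℝ) < M)),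
      sq_nonneg (M - 1), mul_nonneg (abs_nonneg C) (by nlinarith : 0 ≤ M ^ 2 - M),
      mul_nonneg (abs_nonneg D) (by nlinarith : 0 ≤ M ^ 2 - 1)]
  have hcont : ContinuousOn (fun x : ℝ => A * x ^ 3 + B * x ^ 2 + C * x + D)
      (Set.Icc 0 M) := by fun_prop
  have hmem : (0 : ℝ) ∈ Set.Icc ((fun x : ℝ => A * x ^ 3 + B * x ^ 2 + C * x + D) 0)
      ((fun x : ℝ => A * x ^ 3 + B * x ^ 2 + C * x + D) M) := by
    constructor <;> simp <;> nlinarith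
  have := intermediate_value_Icc (by linarith : (0:ℝ) ≤ M) hcont hmem
  obtain ⟨x, hx, hfx⟩ := this
  refine ⟨x, ?_, hfx⟩
  rcases eq_or_lt_of_le hx.1 with h0 | h0
  · exfalso
    rw [← h0] at hfx
    simp at hfx
    linarith
  · exact h0

/-- No two distinct positive roots. -/
lemma no_two_roots (κ m c x y : ℝ) (hκ : κ < 0) (hm : 0 < m) (hc4 : 0 < c ^ 4)
    (h : 0 < c ^ 4 * κ + m ^ 2) (hx : 0 < x) (hxy : x < y)
    (hqx : 16 * κ ^ 2 * (c ^ 4 * κ + m ^ 2) * x ^ 3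
        - 8 * κ * (6 * c ^ 4 * κ + 5 * m ^ 2) * x ^ 2
        + (48 * c ^ 4 * κ + 25 * m ^ 2) * x - 16 * c ^ 4 = 0)
    (hqy : 16 * κ ^ 2 * (c ^ 4 * κ + m ^ 2) * y ^ 3
        - 8 * κ * (6 * c ^ 4 * κ + 5 * m ^ 2) * y ^ 2
        + (48 * c ^ 4 * κ + 25 * m ^ 2) * y - 16 * c ^ 4 = 0) : False := by
  have hy0 : 0 < y := hx.trans hxy
  have hκ2 : 0 < κ ^ 2 := by nlinarith
  have hA : 0 < 16 * κ ^ 2 * (c ^ 4 * κ + m ^ 2) := by positivity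
  have hxy0 : 0 < x * y := mul_pos hx hy0
  by_cases hs : 0 ≤ 6 * c ^ 4 * κ + 5 * m ^ 2
  · -- B ≥ 0 case: use q(x)*y - q(y)*x
    have key : (x - y) * (16 * κ ^ 2 * (c ^ 4 * κ + m ^ 2) * (x * y) * (x + y)
        - 8 * κ * (6 * c ^ 4 * κ + 5 * m ^ 2) * (x * y) + 16 * c ^ 4) = 0 := by
      linear_combination y * hqx - x * hqy
    have t1 : 0 < 16 * κ ^ 2 * (c ^ 4 * κ + m ^ 2) * (x * y) * (x + y) :=
      mul_pos (mul_pos hA hxy0) (by linarith)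
    have t2 : 0 ≤ -8 * κ * ((6 * c ^ 4 * κ + 5 * m ^ 2) * (x * y)) :=
      mul_nonneg (by linarith) (mul_nonneg hs hxy0.le)
    have hbr : 0 < 16 * κ ^ 2 * (c ^ 4 * κ + m ^ 2) * (x * y) * (x + y)
        - 8 * κ * (6 * c ^ 4 * κ + 5 * m ^ 2) * (x * y) + 16 * c ^ 4 := by
      nlinarith
    nlinarith [mul_neg_of_neg_of_pos (by linarith : x - y < 0) hbr]
  · -- B < 0 case, then C < 0 too: use q(x)*y³ - q(y)*x³
    push_neg at hs
    have hC : 48 * c ^ 4 * κ + 25 * m ^ 2 < 0 := by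
      nlinarith [mul_pos hc4 (show 0 < -κ by linarith)]
    have key : (y - x) * ((-8 * κ * (6 * c ^ 4 * κ + 5 * m ^ 2)) * (x * y) ^ 2
        + (48 * c ^ 4 * κ + 25 * m ^ 2) * (x * y) * (x + y)
        - 16 * c ^ 4 * (x ^ 2 + x * y + y ^ 2)) = 0 := by
      linear_combination y ^ 3 * hqx - x ^ 3 * hqy
    have t1 : -8 * κ * (6 * c ^ 4 * κ + 5 * m ^ 2) * (x * y) ^ 2 < 0 :=
      mul_neg_of_neg_of_pos (mul_neg_of_pos_of_neg (by linarith) hs) (by positivity)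
    have t2 : (48 * c ^ 4 * κ + 25 * m ^ 2) * (x * y) * (x + y) < 0 :=
      mul_neg_of_neg_of_pos (mul_neg_of_neg_of_pos hC hxy0) (by linarith)
    have t3 : 0 < 16 * c ^ 4 * (x ^ 2 + x * y + y ^ 2) := by positivity
    have hbr : (-8 * κ * (6 * c ^ 4 * κ + 5 * m ^ 2)) * (x * y) ^ 2
        + (48 * c ^ 4 * κ + 25 * m ^ 2) * (x * y) * (x + y)
        - 16 * c ^ 4 * (x ^ 2 + x * y + y ^ 2) < 0 := by nlinarith
    nlinarith [mul_neg_of_pos_of_neg (by linarith : 0 < y - x) hbr]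

/-- For `κ < 0`, `m > 0`, `c ≠ 0` with `c⁴κ + m² > 0`, the polynomial
`q(x) = 16κ²(c⁴κ + m²)x³ − 8κ(6c⁴κ + 5m²)x² + (48c⁴κ + 25m²)x − 16c⁴`
has exactly one positive real root. -/
theorem stmt_15 (κ m c : ℝ) (hκ : κ < 0) (hm : 0 < m) (hc : c ≠ 0)
    (h : 0 < c ^ 4 * κ + m ^ 2) :
    ∃! x : ℝ, 0 < x ∧
      16 * κ ^ 2 * (c ^ 4 * κ + m ^ 2) * x ^ 3
        - 8 * κ * (6 * c ^ 4 * κ + 5 * m ^ 2) * x ^ 2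
        + (48 * c ^ 4 * κ + 25 * m ^ 2) * x - 16 * c ^ 4 = 0 := by
  have hc4 : 0 < c ^ 4 := by positivity
  have hκ2 : 0 < κ ^ 2 := by nlinarith
  have hA : 0 < 16 * κ ^ 2 * (c ^ 4 * κ + m ^ 2) := by positivity
  obtain ⟨x, hx, hfx⟩ := cubic_pos_root (16 * κ ^ 2 * (c ^ 4 * κ + m ^ 2))
    (-8 * κ * (6 * c ^ 4 * κ + 5 * m ^ 2)) (48 * c ^ 4 * κ + 25 * m ^ 2)
    (-16 * c ^ 4) hA (by linarith)
  refine ⟨x, ⟨hx, by linear_combination hfx⟩, ?_⟩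
  rintro y ⟨hy, hqy⟩
  have hqx : 16 * κ ^ 2 * (c ^ 4 * κ + m ^ 2) * x ^ 3
      - 8 * κ * (6 * c ^ 4 * κ + 5 * m ^ 2) * x ^ 2
      + (48 * c ^ 4 * κ + 25 * m ^ 2) * x - 16 * c ^ 4 = 0 := by
    linear_combination hfx
  rcases lt_trichotomy y x with hlt | heq | hgt
  · exact absurd (no_two_roots κ m c y x hκ hm hc4 h hy hlt hqy hqx) (by simp)
  · exact heq
  · exact absurd (no_two_roots κ m c x y hκ hm hc4 h hx hgt hqx hqy) (by simp)
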